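/- Let l ≡ 3 (mod 4) be an integer and q a positive integer. For the Kronecker symbol χ^{(4l)} = (4l|·) modulo 4l, the Gauss sum τ(χ^{(4l)}, q) = Σ_{j mod 4l} χ^{(4l)}(j)e(jq/(4l)) satisfies: τ(χ^{(4l)}, q) = 0 if q is even; τ(χ^{(4l)}, q) = -2i·τ(χ_l, q) if q ≡ 1 (mod 4); and τ(χ^{(4l)}, q) = 2i·τ(χ_l, q) if q ≡ 3 (mod 4). -/

import Mathlib

/-- The Kronecker symbol `(m | n)` for `n : ℕ`: multiplicative in `n`, with
`(m | 2) = χ₈(m)` and `(m | odd part)` the Jacobi symbol; `(m | 0) = 1` iff `m = ±1`. -/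
noncomputable def kronSym (m : ℤ) (n : ℕ) : ℤ :=
  if n = 0 then (if m = 1 ∨ m = -1 then 1 else 0)
  else (ZMod.χ₈ (m : ZMod 8)) ^ (n.factorization 2) * jacobiSym m (n / 2 ^ (n.factorization 2))


lemma kron_eq (l : ℕ) (hl : l % 4 = 3) (j : ℕ) :
    kronSym (4 * (l : ℤ)) j = ZMod.χ₄ (j : ZMod 4) * jacobiSym (j : ℤ) l := by
  have hl2 : l % 2 = 1 := by omega
  have hlodd : Odd l := Nat.odd_iff.mpr hl2
  have hl3 : 3 ≤ l := by omega
  rcases Nat.eq_zero_or_pos j with rfl | hj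
  · have h1 : ¬((4 * (l:ℤ) = 1) ∨ (4 * (l:ℤ) = -1)) := by
      have : (3:ℤ) ≤ (l:ℤ) := by exact_mod_cast hl3
      omega
    simp only [kronSym, if_pos rfl, if_neg h1]
    rw [show ((0:ℕ) : ZMod 4) = ((0:ℕ) : ZMod 4) from rfl]
    rw [ZMod.χ₄_nat_eq_if_mod_four]
    norm_num
  rcases Nat.even_or_odd j with hje | hjo
  · -- j even and positive
    have hdvd : 2 ∣ j := hje.two_dvd
    have hv : 0 < j.factorization 2 :=
      Nat.Prime.factorization_pos_of_dvd Nat.prime_two hj.ne' hdvd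
    have hχ8 : ZMod.χ₈ ((4 * (l:ℤ) : ℤ) : ZMod 8) = 0 := by
      rw [ZMod.χ₈_int_eq_if_mod_eight]
      have : (4 * (l:ℤ)) % 2 = 0 := by omega
      simp [this]
    have hχ4 : ZMod.χ₄ (j : ZMod 4) = 0 := by
      rw [ZMod.χ₄_nat_eq_if_mod_four]
      have : j % 2 = 0 := Nat.even_iff.mp hje
      simp [this]
    rw [kronSym, if_neg hj.ne', hχ8, hχ4, zero_pow hv.ne', zero_mul, zero_mul]
  · -- j odd
    have hj2 : j % 2 = 1 := Nat.odd_iff.mp hjo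
    have hv : j.factorization 2 = 0 :=
      Nat.factorization_eq_zero_of_not_dvd (by omega)
    have hgcd2 : (2:ℤ).gcd j = 1 := by
      have : Nat.Coprime 2 j := Nat.coprime_two_left.mpr hjo
      simpa [Int.gcd] using this
    rw [kronSym, if_neg hj.ne', hv, pow_zero, one_mul, pow_zero, Nat.div_one]
    have h4 : jacobiSym (4 * (l:ℤ)) j = jacobiSym (l:ℤ) j := by
      rw [jacobiSym.mul_left]
      have : (4:ℤ) = (2:ℤ)^2 := by norm_num
      rw [this, jacobiSym.sq_one' hgcd2, one_mul]
    rw [h4]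
    rcases Nat.odd_mod_four_iff.mp hj2 with hj4 | hj4
    · rw [jacobiSym.quadratic_reciprocity_one_mod_four' hlodd hj4,
        ZMod.χ₄_nat_one_mod_four hj4, one_mul]
    · rw [jacobiSym.quadratic_reciprocity_three_mod_four hl hj4,
        ZMod.χ₄_nat_three_mod_four hj4, neg_one_mul]

lemma inj_aux (l : ℕ) (hl : l % 4 = 3) :
    ∀ p ∈ Finset.range 4 ×ˢ Finset.range l, ∀ p' ∈ Finset.range 4 ×ˢ Finset.range l,
      (l * p.1 + 4 * p.2) % (4 * l) = (l * p'.1 + 4 * p'.2) % (4 * l) → p = p' := by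
  have hg4l : Nat.gcd 4 l = 1 := by rw [Nat.gcd_rec, hl]; decide
  have hgl4 : Nat.gcd l 4 = 1 := by rw [Nat.gcd_comm]; exact hg4l
  rintro ⟨a, b⟩ hp ⟨a', b'⟩ hp' h
  simp only [Finset.mem_product, Finset.mem_range] at hp hp'
  have hmod : l * a + 4 * b ≡ l * a' + 4 * b' [MOD 4 * l] := h
  have ea : l * a ≡ l * a + 4 * b [MOD 4] := by
    simpa using (Nat.ModEq.refl (l * a)).add ((Nat.modEq_zero_iff_dvd.mpr ⟨b, rfl⟩).symm)
  have ea' : l * a' ≡ l * a' + 4 * b' [MOD 4] := by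
    simpa using (Nat.ModEq.refl (l * a')).add ((Nat.modEq_zero_iff_dvd.mpr ⟨b', rfl⟩).symm)
  have h4 : a % 4 = a' % 4 :=
    Nat.ModEq.cancel_left_of_coprime hg4l (ea.trans ((hmod.of_mul_right l).trans ea'.symm))
  have ha : a = a' := by omega
  have eb : 4 * b ≡ l * a + 4 * b [MOD l] := by
    simpa using ((Nat.modEq_zero_iff_dvd.mpr ⟨a, rfl⟩).symm).add (Nat.ModEq.refl (4 * b))
  have eb' : 4 * b' ≡ l * a' + 4 * b' [MOD l] := by
    simpa using ((Nat.modEq_zero_iff_dvd.mpr ⟨a', rfl⟩).symm).add (Nat.ModEq.refl (4 * b'))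
  have hlb : b % l = b' % l :=
    Nat.ModEq.cancel_left_of_coprime hgl4 (eb.trans ((hmod.of_mul_left 4).trans eb'.symm))
  have hb : b = b' := by
    rwa [Nat.mod_eq_of_lt hp.2, Nat.mod_eq_of_lt hp'.2] at hlb
  exact Prod.ext ha hb

lemma sum_reindex (l : ℕ) (hl : l % 4 = 3) {M : Type*} [AddCommMonoid M] (F : ℕ → M) :
    ∑ j ∈ Finset.range (4 * l), F j
      = ∑ a ∈ Finset.range 4, ∑ b ∈ Finset.range l, F ((l * a + 4 * b) % (4 * l)) := by
  have hl0 : 0 < l := by omega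
  rw [← Finset.sum_product']
  refine (Finset.sum_bij (fun p _ => (l * p.1 + 4 * p.2) % (4 * l)) ?_ ?_ ?_ ?_).symm
  · intro p _
    exact Finset.mem_range.mpr (Nat.mod_lt _ (by positivity))
  · intro p hp p' hp' h
    exact inj_aux l hl p hp p' hp' h
  · intro j hj
    obtain ⟨p, hp, hpe⟩ := Finset.surj_on_of_inj_on_of_card_le
      (s := Finset.range 4 ×ˢ Finset.range l) (t := Finset.range (4 * l))
      (fun p _ => (l * p.1 + 4 * p.2) % (4 * l))
      (fun p _ => Finset.mem_range.mpr (Nat.mod_lt _ (by positivity)))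
      (fun p p' hp hp' h => inj_aux l hl p hp p' hp' h) (by simp) j hj
    exact ⟨p, hp, hpe.symm⟩
  · intro p _
    rfl

/-- for `l ≡ 3 (mod 4)` and `q > 0`, the Gauss sum of the Kronecker symbol
`χ^{(4l)}` modulo `4l` vanishes for even `q` and equals `∓2i τ(χ_l, q)` according to
`q ≡ 1, 3 (mod 4)`. -/
theorem stmt4 (l : ℕ) (hl : l % 4 = 3) (q : ℕ) (hq : 0 < q)
    (τ4 τl : ℂ)
    (hτ4 : τ4 = ∑ j ∈ Finset.range (4 * l), (kronSym (4 * (l : ℤ)) j : ℂ) *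
      Complex.exp (2 * Real.pi * Complex.I * (j : ℂ) * (q : ℂ) / ((4 * l : ℕ) : ℂ)))
    (hτl : τl = ∑ j ∈ Finset.range l, (jacobiSym (j : ℤ) l : ℂ) *
      Complex.exp (2 * Real.pi * Complex.I * (j : ℂ) * (q : ℂ) / (l : ℂ))) :
    (Even q → τ4 = 0) ∧
    (q % 4 = 1 → τ4 = -2 * Complex.I * τl) ∧
    (q % 4 = 3 → τ4 = 2 * Complex.I * τl) := by
  have hl0 : 0 < l := by omega
  have hlC : (l : ℂ) ≠ 0 := Nat.cast_ne_zero.mpr hl0.ne'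
  set E : ℕ → ℂ := fun j => Complex.exp (2 * Real.pi * Complex.I * (j : ℂ) * (q : ℂ) / ((4 * l : ℕ) : ℂ)) with hE
  set F : ℕ → ℂ := fun j =>
    ((ZMod.χ₄ (j : ZMod 4) : ℤ) : ℂ) * ((jacobiSym (j : ℤ) l : ℤ) : ℂ) * E j with hF
  -- Step 1: τ4 = ∑ F
  have step1 : τ4 = ∑ j ∈ Finset.range (4 * l), F j := by
    rw [hτ4]
    refine Finset.sum_congr rfl fun j _ => ?_
    rw [hF, kron_eq l hl j, Int.cast_mul]
  -- Step 2: reindex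
  rw [sum_reindex l hl F] at step1
  -- Step 3: pointwise evaluation
  have step3 : ∀ a ∈ Finset.range 4, ∀ b ∈ Finset.range l,
      F ((l * a + 4 * b) % (4 * l)) =
        ((-1 : ℂ) * ((ZMod.χ₄ (a : ZMod 4) : ℤ) : ℂ) *
          Complex.exp (2 * Real.pi * Complex.I * (a : ℂ) * (q : ℂ) / 4)) *
        (((jacobiSym (b : ℤ) l : ℤ) : ℂ) *
          Complex.exp (2 * Real.pi * Complex.I * (b : ℂ) * (q : ℂ) / (l : ℂ))) := by
    intro a ha b hb
    rw [Finset.mem_range] at ha hb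
    set j := l * a + 4 * b with hj
    set r := j % (4 * l) with hr
    have hχ : ZMod.χ₄ (r : ZMod 4) = -ZMod.χ₄ (a : ZMod 4) := by
      have h1 : ((r : ℕ) : ZMod 4) = ((j : ℕ) : ZMod 4) :=
        (ZMod.natCast_eq_natCast_iff _ _ _).mpr ((Nat.mod_modEq j (4 * l)).of_mul_right l)
      have h2 : ((j : ℕ) : ZMod 4) = ((l : ℕ) : ZMod 4) * ((a : ℕ) : ZMod 4) := by
        push_cast [hj]
        have : ((4 : ℕ) : ZMod 4) = 0 := by decide
        push_cast at this
        rw [this]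
        ring
      rw [h1, h2, map_mul, ZMod.χ₄_nat_three_mod_four hl, neg_one_mul]
    have hJ : jacobiSym (r : ℤ) l = jacobiSym (b : ℤ) l := by
      have hm : r % l = j % l := (Nat.mod_modEq j (4 * l)).of_mul_left 4
      have hmz : (r : ℤ) % l = (j : ℤ) % l := by
        have := congrArg (Nat.cast : ℕ → ℤ) hm
        push_cast at this
        exact this
      rw [jacobiSym.mod_left' hmz]
      have hjz : ((j : ℕ) : ℤ) = 4 * (b : ℤ) + (l : ℤ) * a := by push_cast [hj]; ring
      have hmz2 : ((j : ℕ) : ℤ) % l = (4 * (b : ℤ)) % l := by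
        rw [hjz, Int.add_mul_emod_self_left]
      rw [jacobiSym.mod_left' hmz2, jacobiSym.mul_left]
      have hgcd2 : (2 : ℤ).gcd l = 1 := by
        have : Nat.Coprime 2 l := Nat.coprime_two_left.mpr (Nat.odd_iff.mpr (by omega))
        simpa [Int.gcd] using this
      rw [show (4 : ℤ) = (2 : ℤ) ^ 2 by norm_num, jacobiSym.sq_one' hgcd2, one_mul]
    have hExp : E r = Complex.exp (2 * Real.pi * Complex.I * (a : ℂ) * (q : ℂ) / 4) *
        Complex.exp (2 * Real.pi * Complex.I * (b : ℂ) * (q : ℂ) / (l : ℂ)) := by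
      have hdm : j = 4 * l * (j / (4 * l)) + r := (Nat.div_add_mod j (4 * l)).symm
      set k := j / (4 * l) with hk
      have hrc : (r : ℂ) = (j : ℂ) - 4 * l * k := by
        have : (j : ℂ) = 4 * l * k + r := by exact_mod_cast congrArg (Nat.cast : ℕ → ℂ) hdm
        rw [this]; ring
      have h4l : ((4 * l : ℕ) : ℂ) = 4 * (l : ℂ) := by push_cast; ring
      rw [hE]
      simp only []
      rw [h4l, hrc]
      have harg : 2 * (Real.pi : ℂ) * Complex.I * ((j : ℂ) - 4 * l * k) * q / (4 * l) =
          (2 * (Real.pi : ℂ) * Complex.I * (a : ℂ) * q / 4 +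
            2 * (Real.pi : ℂ) * Complex.I * (b : ℂ) * q / (l : ℂ)) -
          ((k * q : ℕ) : ℂ) * (2 * Real.pi * Complex.I) := by
        have hjc : (j : ℂ) = l * a + 4 * b := by push_cast [hj]; ring
        rw [hjc]
        push_cast
        field_simp
      rw [harg, Complex.exp_sub, Complex.exp_add]
      have : Complex.exp (((k * q : ℕ) : ℂ) * (2 * Real.pi * Complex.I)) = 1 := by
        exact_mod_cast Complex.exp_int_mul_two_pi_mul_I ((k * q : ℕ) : ℤ)
      rw [this, div_one]
    rw [hF]
    simp only []
    rw [hχ, hJ, hExp]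
    push_cast
    ring
  rw [Finset.sum_congr rfl (fun a ha => Finset.sum_congr rfl (fun b hb => step3 a ha b hb))] at step1
  -- Step 4: factor the double sum
  have step4 : τ4 = (∑ a ∈ Finset.range 4, (-1 : ℂ) * ((ZMod.χ₄ (a : ZMod 4) : ℤ) : ℂ) *
      Complex.exp (2 * Real.pi * Complex.I * (a : ℂ) * (q : ℂ) / 4)) * τl := by
    rw [step1, hτl, Finset.sum_mul]
    refine Finset.sum_congr rfl fun a _ => ?_
    rw [Finset.mul_sum]
  -- Step 5: evaluate the sum over a
  have hI : Complex.exp ((Real.pi : ℂ) / 2 * Complex.I) = Complex.I := by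
    have h : ((Real.pi : ℂ) / 2) = ((Real.pi / 2 : ℝ) : ℂ) := by push_cast; ring
    rw [h, Complex.exp_mul_I, ← Complex.ofReal_cos, ← Complex.ofReal_sin,
      Real.cos_pi_div_two, Real.sin_pi_div_two]
    simp
  have expI : ∀ n : ℕ, Complex.exp ((n : ℂ) * ((Real.pi : ℂ) / 2 * Complex.I)) = Complex.I ^ n := by
    intro n
    rw [Complex.exp_nat_mul, hI]
  have e1 : Complex.exp (2 * (Real.pi : ℂ) * Complex.I * ((1 : ℕ) : ℂ) * (q : ℂ) / 4) =
      Complex.I ^ q := by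
    rw [show (2 * (Real.pi : ℂ) * Complex.I * ((1 : ℕ) : ℂ) * (q : ℂ) / 4)
        = (q : ℂ) * ((Real.pi : ℂ) / 2 * Complex.I) by push_cast; ring]
    exact expI q
  have e3 : Complex.exp (2 * (Real.pi : ℂ) * Complex.I * ((3 : ℕ) : ℂ) * (q : ℂ) / 4) =
      Complex.I ^ (3 * q) := by
    rw [show (2 * (Real.pi : ℂ) * Complex.I * ((3 : ℕ) : ℂ) * (q : ℂ) / 4)
        = ((3 * q : ℕ) : ℂ) * ((Real.pi : ℂ) / 2 * Complex.I) by push_cast; ring]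
    exact expI (3 * q)
  have c0 : (ZMod.χ₄ (((0 : ℕ) : ZMod 4)) : ℤ) = 0 := by decide
  have c1 : (ZMod.χ₄ (((1 : ℕ) : ZMod 4)) : ℤ) = 1 := by decide
  have c2 : (ZMod.χ₄ (((2 : ℕ) : ZMod 4)) : ℤ) = 0 := by decide
  have c3 : (ZMod.χ₄ (((3 : ℕ) : ZMod 4)) : ℤ) = -1 := by decide
  have hSval : (∑ a ∈ Finset.range 4, (-1 : ℂ) * ((ZMod.χ₄ (a : ZMod 4) : ℤ) : ℂ) *
      Complex.exp (2 * Real.pi * Complex.I * (a : ℂ) * (q : ℂ) / 4)) =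
      -(Complex.I ^ q - Complex.I ^ (3 * q)) := by
    rw [Finset.sum_range_succ, Finset.sum_range_succ, Finset.sum_range_succ,
      Finset.sum_range_one, c0, c1, c2, c3, e1, e3]
    push_cast
    ring
  rw [hSval] at step4
  -- final case analysis
  refine ⟨?_, ?_, ?_⟩
  · rintro ⟨k, hk⟩
    have hq2 : q = 2 * k := by omega
    have : Complex.I ^ q - Complex.I ^ (3 * q) = 0 := by
      rw [hq2, show 3 * (2 * k) = 2 * (3 * k) by ring, pow_mul, pow_mul, Complex.I_sq,
        show (3 : ℕ) * k = k * 3 by ring, pow_mul]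
      rcases Nat.even_or_odd k with he | ho
      · rw [he.neg_one_pow]; norm_num
      · rw [ho.neg_one_pow]; norm_num
    rw [step4, this]
    ring
  · intro h1
    obtain ⟨m, hm⟩ : ∃ m, q = 4 * m + 1 := ⟨q / 4, by omega⟩
    have hq' : Complex.I ^ q = Complex.I := by
      rw [hm, pow_add, pow_mul, Complex.I_pow_four, one_pow, pow_one, one_mul]
    have hq3 : Complex.I ^ (3 * q) = -Complex.I := by
      rw [hm, show 3 * (4 * m + 1) = 4 * (3 * m) + 3 by ring, pow_add, pow_mul,
        Complex.I_pow_four, one_pow, one_mul, pow_succ, Complex.I_sq]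
      ring
    rw [step4, hq', hq3]
    ring
  · intro h3
    obtain ⟨m, hm⟩ : ∃ m, q = 4 * m + 3 := ⟨q / 4, by omega⟩
    have hq' : Complex.I ^ q = -Complex.I := by
      rw [hm, pow_add, pow_mul, Complex.I_pow_four, one_pow, one_mul, pow_succ, Complex.I_sq]
      ring
    have hq3 : Complex.I ^ (3 * q) = Complex.I := by
      rw [hm, show 3 * (4 * m + 3) = 4 * (3 * m + 2) + 1 by ring, pow_add, pow_mul,
        Complex.I_pow_four, one_pow, pow_one, one_mul]
    rw [step4, hq', hq3]
    ring
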